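/- Let d ≥ 1, κ ≥ 2d, and let α₁, α₂ : ℝ^{2d} → ℂ be continuously differentiable with ‖α_i‖_{A^{κ,2}} < ∞ and ‖∇_v α_i‖_{A^{κ,2}} < ∞. Define φ_i(x) := ∫_{ℝ^d} conj(α_i)(x,v) ∇_v α_i(x,v) dv. Then ‖φ₁ − φ₂‖_{L¹(ℝ^d)} ≤ (‖∇_v α₁‖_{A^{κ,2}} + ‖∇_v α₂‖_{A^{κ,2}}) ‖α₁ − α₂‖_{A^{κ,2}}. -/

import Mathlib

open MeasureTheory
open scoped ENNReal NNReal

/-- `ℝ^d` as a Euclidean space. -/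
abbrev E (d : ℕ) : Type := EuclideanSpace ℝ (Fin d)

/-- The `A^{κ,p}` norm: `sup_{R ≥ 0} (1+R)^{-κ/p} (∫ sup_{|z̄| ≤ R} ‖f(z+z̄)‖^p dz)^{1/p}`. -/
noncomputable def Anorm {G F : Type*} [NormedAddCommGroup G] [MeasureSpace G]
    [NormedAddCommGroup F] (κ p : ℝ) (f : G → F) : ℝ≥0∞ :=
  ⨆ R : NNReal, (ENNReal.ofReal (1 + (R : ℝ))) ^ (-(κ / p)) *
    (∫⁻ z, ⨆ w ∈ Metric.closedBall (0 : G) (R : ℝ),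
      ENNReal.ofReal (‖f (z + w)‖ ^ p)) ^ (1 / p)

/-- The velocity gradient `∇ᵥα` of a function on phase space, as a continuous linear map. -/
noncomputable def gradV (d : ℕ) (α : E d × E d → ℂ) (z : E d × E d) : E d →L[ℝ] ℂ :=
  fderiv ℝ (fun w : E d => α (z.1, w)) z.2

/-- The phase density `φ(x) = ∫ conj(α)(x,v) ∇ᵥα(x,v) dv`. -/
noncomputable def phaseDensity (d : ℕ) (α : E d × E d → ℂ) (x : E d) : E d →L[ℝ] ℂ :=
  ∫ v : E d, (starRingEnd ℂ) (α (x, v)) • gradV d α (x, v)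

/- auxiliary lemmas -/
lemma l2_le_Anorm {G F : Type*} [NormedAddCommGroup G] [MeasureSpace G]
    [NormedAddCommGroup F] (κ : ℝ) (f : G → F) :
    (∫⁻ z, (ENNReal.ofReal ‖f z‖) ^ (2:ℝ)) ^ ((1:ℝ)/2) ≤ Anorm κ 2 f := by
  have h0 := le_iSup (fun R : NNReal => (ENNReal.ofReal (1 + (R : ℝ))) ^ (-(κ / 2)) *
    (∫⁻ z, ⨆ w ∈ Metric.closedBall (0 : G) (R : ℝ),
      ENNReal.ofReal (‖f (z + w)‖ ^ (2:ℝ))) ^ (1 / (2:ℝ))) 0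
  refine le_trans ?_ h0
  have h1 : ∀ z : G, (⨆ w ∈ Metric.closedBall (0 : G) ((0:NNReal) : ℝ),
      ENNReal.ofReal (‖f (z + w)‖ ^ (2:ℝ))) = (ENNReal.ofReal ‖f z‖) ^ (2:ℝ) := by
    intro z
    rw [show (((0:NNReal)):ℝ) = 0 by simp, Metric.closedBall_zero]
    rw [iSup_singleton]
    rw [add_zero, ← ENNReal.ofReal_rpow_of_nonneg (norm_nonneg _) (by norm_num)]
  simp only [h1]
  rw [show (((0:NNReal)):ℝ) = 0 by simp, add_zero, ENNReal.ofReal_one, ENNReal.one_rpow, one_mul]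

lemma lt_top_of_half {X : ℝ≥0∞} (h : X ^ ((1:ℝ)/2) < ⊤) : X < ⊤ := by
  by_contra hX
  rw [not_lt, top_le_iff] at hX
  subst hX
  rw [ENNReal.top_rpow_of_pos (by norm_num)] at h
  exact (lt_irrefl _ h)

lemma diffAt_slice {d : ℕ} {α : E d × E d → ℂ} (hs : ContDiff ℝ 1 α) (x v : E d) :
    DifferentiableAt ℝ (fun w : E d => α (x, w)) v :=
  (hs.differentiable one_ne_zero (x, v)).comp v ((differentiableAt_const x).prodMk differentiableAt_id)

noncomputable def conjCLM : ℂ →L[ℝ] ℂ := Complex.conjCLE.toContinuousLinearMap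

lemma conjCLM_comp_norm {d : ℕ} (L : E d →L[ℝ] ℂ) : ‖conjCLM.comp L‖ ≤ ‖L‖ := by
  refine ContinuousLinearMap.opNorm_le_bound _ (norm_nonneg L) (fun y => ?_)
  have : ‖conjCLM (L y)‖ = ‖L y‖ := by simp [conjCLM]
  rw [ContinuousLinearMap.comp_apply, this]
  exact L.le_opNorm y

/-- helper for integrability -/
lemma integrable_of_bnd {d : ℕ} {V : Type*} [NormedAddCommGroup V] {f : E d → V}
    {b : E d → ℝ≥0∞} (hf : AEStronglyMeasurable f (volume : Measure (E d)))
    (c : ℝ≥0∞) (hc : c ≠ ⊤) (hb : (∫⁻ v, b v) < ⊤)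
    (h : ∀ v, ENNReal.ofReal ‖f v‖ ≤ c * b v) : Integrable f := by
  refine ⟨hf, ?_⟩
  have h1 : (∫⁻ v, (‖f v‖₊ : ℝ≥0∞)) ≤ c * ∫⁻ v, b v := by
    rw [← lintegral_const_mul' _ _ hc]
    refine lintegral_mono (fun v => ?_)
    rw [← enorm_eq_nnnorm, ← ofReal_norm]
    exact h v
  exact lt_of_le_of_lt h1 (ENNReal.mul_lt_top hc.lt_top hb)

set_option maxHeartbeats 2000000 in
lemma corex {d : ℕ} {α₁ α₂ : E d × E d → ℂ} (hs₁ : ContDiff ℝ 1 α₁) (hs₂ : ContDiff ℝ 1 α₂)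
    (x : E d)
    (hfin : (∫⁻ v, ((ENNReal.ofReal ‖α₁ (x,v)‖ + ENNReal.ofReal ‖α₂ (x,v)‖
        + ENNReal.ofReal ‖α₁ (x,v) - α₂ (x,v)‖) *
        (ENNReal.ofReal ‖gradV d α₁ (x,v)‖ + ENNReal.ofReal ‖gradV d α₂ (x,v)‖)
        + ENNReal.ofReal ‖α₂ (x,v)‖ * ENNReal.ofReal ‖α₁ (x,v) - α₂ (x,v)‖)) < ⊤) :
    ENNReal.ofReal ‖phaseDensity d α₁ x - phaseDensity d α₂ x‖ ≤
      ∫⁻ v, ENNReal.ofReal ‖α₁ (x,v) - α₂ (x,v)‖ *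
        (ENNReal.ofReal ‖gradV d α₁ (x,v)‖ + ENNReal.ofReal ‖gradV d α₂ (x,v)‖) := by
  -- abbreviations
  set B : E d → ℝ≥0∞ := fun v => ((ENNReal.ofReal ‖α₁ (x,v)‖ + ENNReal.ofReal ‖α₂ (x,v)‖
        + ENNReal.ofReal ‖α₁ (x,v) - α₂ (x,v)‖) *
        (ENNReal.ofReal ‖gradV d α₁ (x,v)‖ + ENNReal.ofReal ‖gradV d α₂ (x,v)‖)
        + ENNReal.ofReal ‖α₂ (x,v)‖ * ENNReal.ofReal ‖α₁ (x,v) - α₂ (x,v)‖) with hB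
  -- continuity facts
  have cx : Continuous (fun v : E d => ((x, v) : E d × E d)) := by fun_prop
  have cα₁ : Continuous (fun v => α₁ (x,v)) := hs₁.continuous.comp cx
  have cα₂ : Continuous (fun v => α₂ (x,v)) := hs₂.continuous.comp cx
  have cG₁ : Continuous (fun v => gradV d α₁ (x,v)) := by
    have : Continuous (gradV d α₁) := by
      have h : Continuous (fun z => (fderiv ℝ α₁ z).comp (ContinuousLinearMap.inr ℝ (E d) (E d))) :=
        (hs₁.continuous_fderiv one_ne_zero).clm_comp continuous_const
      refine h.congr (fun z => ?_)
      have h2 : HasFDerivAt (fun w : E d => (z.1, w))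
          (ContinuousLinearMap.inr ℝ (E d) (E d)) z.2 :=
        (hasFDerivAt_const z.1 z.2).prodMk (hasFDerivAt_id z.2)
      exact (((hs₁.differentiable one_ne_zero z).hasFDerivAt.comp z.2 h2 : _).fderiv).symm
    exact this.comp cx
  have cG₂ : Continuous (fun v => gradV d α₂ (x,v)) := by
    have : Continuous (gradV d α₂) := by
      have h : Continuous (fun z => (fderiv ℝ α₂ z).comp (ContinuousLinearMap.inr ℝ (E d) (E d))) :=
        (hs₂.continuous_fderiv one_ne_zero).clm_comp continuous_const
      refine h.congr (fun z => ?_)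
      have h2 : HasFDerivAt (fun w : E d => (z.1, w))
          (ContinuousLinearMap.inr ℝ (E d) (E d)) z.2 :=
        (hasFDerivAt_const z.1 z.2).prodMk (hasFDerivAt_id z.2)
      exact (((hs₂.differentiable one_ne_zero z).hasFDerivAt.comp z.2 h2 : _).fderiv).symm
    exact this.comp cx
  -- differentiability facts
  have hd₁ : ∀ v, DifferentiableAt ℝ (fun w : E d => α₁ (x,w)) v := diffAt_slice hs₁ x
  have hd₂ : ∀ v, DifferentiableAt ℝ (fun w : E d => α₂ (x,w)) v := diffAt_slice hs₂ x
  have hdβ : ∀ v, DifferentiableAt ℝ (fun w : E d => α₁ (x,w) - α₂ (x,w)) v :=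
    fun v => (hd₁ v).sub (hd₂ v)
  have hdc : ∀ v, DifferentiableAt ℝ (fun w : E d => (starRingEnd ℂ) (α₂ (x,w))) v :=
    fun v => (conjCLM.differentiableAt).comp v (hd₂ v)
  have fdβ : ∀ v, fderiv ℝ (fun w : E d => α₁ (x,w) - α₂ (x,w)) v
      = gradV d α₁ (x,v) - gradV d α₂ (x,v) := by
    intro v
    rw [fderiv_fun_sub (hd₁ v) (hd₂ v)]
    rfl
  have fdc : ∀ v, fderiv ℝ (fun w : E d => (starRingEnd ℂ) (α₂ (x,w))) v
      = conjCLM.comp (gradV d α₂ (x,v)) := by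
    intro v
    have h := (conjCLM.hasFDerivAt.comp v (hd₂ v).hasFDerivAt).fderiv
    simp only [Function.comp_def] at h
    exact h

  -- pointwise bound helper
  have le_B1 : ∀ {p q : ℝ≥0∞} (v : E d),
      p ≤ ENNReal.ofReal ‖α₁ (x,v)‖ + ENNReal.ofReal ‖α₂ (x,v)‖
        + ENNReal.ofReal ‖α₁ (x,v) - α₂ (x,v)‖ →
      q ≤ ENNReal.ofReal ‖gradV d α₁ (x,v)‖ + ENNReal.ofReal ‖gradV d α₂ (x,v)‖ →
      p * q ≤ B v := by
    intro p q v h1 h2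
    exact le_trans (mul_le_mul' h1 h2) le_self_add
  have nsmulR : ∀ (c : ℂ) (L : E d →L[ℝ] ℂ), ‖c • L‖ = ‖c‖ * ‖L‖ := fun c L => norm_smul c L
  have nsmul : ∀ (c : ℂ) (L : E d →L[ℝ] ℂ),
      ENNReal.ofReal ‖c • L‖ = ENNReal.ofReal ‖c‖ * ENNReal.ofReal ‖L‖ := fun c L => by
    rw [nsmulR, ENNReal.ofReal_mul (norm_nonneg _)]
  -- integrability facts
  have Bfin := hfin
  have I1 : Integrable (fun v => (starRingEnd ℂ) (α₁ (x,v)) • gradV d α₁ (x,v)) := by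
    refine integrable_of_bnd (Continuous.aestronglyMeasurable ?_) 1 (by simp) Bfin ?_
    · exact (continuous_star.comp cα₁).smul cG₁
    · intro v
      rw [one_mul, nsmul, RCLike.norm_conj]
      exact le_B1 v (le_self_add.trans le_self_add) le_self_add
  have I2 : Integrable (fun v => (starRingEnd ℂ) (α₂ (x,v)) • gradV d α₂ (x,v)) := by
    refine integrable_of_bnd (Continuous.aestronglyMeasurable ?_) 1 (by simp) Bfin ?_
    · exact (continuous_star.comp cα₂).smul cG₂
    · intro v
      rw [one_mul, nsmul, RCLike.norm_conj]
      exact le_B1 v ((le_add_self).trans le_self_add) le_add_self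
  have I3 : Integrable (fun v => (starRingEnd ℂ) (α₁ (x,v) - α₂ (x,v)) • gradV d α₁ (x,v)) := by
    refine integrable_of_bnd (Continuous.aestronglyMeasurable ?_) 1 (by simp) Bfin ?_
    · exact (continuous_star.comp (cα₁.sub cα₂)).smul cG₁
    · intro v
      rw [one_mul, nsmul, RCLike.norm_conj]
      exact le_B1 v le_add_self le_self_add
  have I4 : Integrable (fun v => (starRingEnd ℂ) (α₂ (x,v)) •
      (gradV d α₁ (x,v) - gradV d α₂ (x,v))) := by
    refine integrable_of_bnd (Continuous.aestronglyMeasurable ?_) 1 (by simp) Bfin ?_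
    · exact (continuous_star.comp cα₂).smul (cG₁.sub cG₂)
    · intro v
      rw [one_mul, nsmul, RCLike.norm_conj]
      refine le_B1 v ((le_add_self).trans le_self_add) ?_
      refine le_trans (ENNReal.ofReal_le_ofReal (norm_sub_le _ _)) ?_
      rw [ENNReal.ofReal_add (norm_nonneg _) (norm_nonneg _)]
  have I6 : Integrable (fun v => (α₁ (x,v) - α₂ (x,v)) • (conjCLM.comp (gradV d α₂ (x,v)))) := by
    refine integrable_of_bnd (Continuous.aestronglyMeasurable ?_) 1 (by simp) Bfin ?_
    · exact (cα₁.sub cα₂).smul (continuous_const.clm_comp cG₂)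
    · intro v
      rw [one_mul, nsmul]
      refine le_B1 v le_add_self ?_
      refine le_trans (ENNReal.ofReal_le_ofReal (conjCLM_comp_norm _)) le_add_self
  have I7 : Integrable (fun v => (starRingEnd ℂ) (α₂ (x,v)) * (α₁ (x,v) - α₂ (x,v))) := by
    refine integrable_of_bnd (Continuous.aestronglyMeasurable ?_) 1 (by simp) Bfin ?_
    · exact (continuous_star.comp cα₂).mul (cα₁.sub cα₂)
    · intro v
      rw [one_mul, norm_mul, RCLike.norm_conj, ENNReal.ofReal_mul (norm_nonneg _)]
      exact le_add_self
  -- the integral identities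
  have e1 : phaseDensity d α₁ x - phaseDensity d α₂ x
      = ∫ v, ((starRingEnd ℂ) (α₁ (x,v)) • gradV d α₁ (x,v)
          - (starRingEnd ℂ) (α₂ (x,v)) • gradV d α₂ (x,v)) := (integral_sub I1 I2).symm
  have pt : ∀ v : E d, (starRingEnd ℂ) (α₁ (x,v)) • gradV d α₁ (x,v)
      - (starRingEnd ℂ) (α₂ (x,v)) • gradV d α₂ (x,v)
      = (starRingEnd ℂ) (α₁ (x,v) - α₂ (x,v)) • gradV d α₁ (x,v)
        + (starRingEnd ℂ) (α₂ (x,v)) • (gradV d α₁ (x,v) - gradV d α₂ (x,v)) := by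
    intro v
    refine ContinuousLinearMap.ext fun e => ?_
    simp only [ContinuousLinearMap.sub_apply, ContinuousLinearMap.add_apply,
      ContinuousLinearMap.smul_apply, smul_eq_mul, map_sub]
    ring
  have e2 : phaseDensity d α₁ x - phaseDensity d α₂ x
      = (∫ v, (starRingEnd ℂ) (α₁ (x,v) - α₂ (x,v)) • gradV d α₁ (x,v))
        + ∫ v, (starRingEnd ℂ) (α₂ (x,v)) • (gradV d α₁ (x,v) - gradV d α₂ (x,v)) := by
    rw [e1]
    simp only [pt]
    exact integral_add I3 I4
  have e3 : (∫ v, (starRingEnd ℂ) (α₂ (x,v)) • (gradV d α₁ (x,v) - gradV d α₂ (x,v)))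
      = - ∫ v, (α₁ (x,v) - α₂ (x,v)) • (conjCLM.comp (gradV d α₂ (x,v))) := by
    refine ContinuousLinearMap.ext (fun e => ?_)
    rw [ContinuousLinearMap.neg_apply, ContinuousLinearMap.integral_apply I4,
      ContinuousLinearMap.integral_apply I6]
    simp only [ContinuousLinearMap.smul_apply, ContinuousLinearMap.sub_apply,
      ContinuousLinearMap.comp_apply, smul_eq_mul]
    have I8 : Integrable (fun v => (starRingEnd ℂ) (α₂ (x,v)) *
        (fderiv ℝ (fun w : E d => α₁ (x,w) - α₂ (x,w)) v) e) := by
      refine integrable_of_bnd (Continuous.aestronglyMeasurable ?_)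
        (ENNReal.ofReal ‖e‖) ENNReal.ofReal_ne_top Bfin ?_
      · simp only [fdβ]
        exact (continuous_star.comp cα₂).mul ((cG₁.sub cG₂).clm_apply continuous_const)
      · intro v
        simp only [fdβ]
        rw [norm_mul, RCLike.norm_conj, ENNReal.ofReal_mul (norm_nonneg _)]
        have hb : ‖(gradV d α₁ (x,v) - gradV d α₂ (x,v)) e‖
            ≤ (‖gradV d α₁ (x,v)‖ + ‖gradV d α₂ (x,v)‖) * ‖e‖ := by
          refine le_trans (ContinuousLinearMap.le_opNorm _ _) ?_
          have := norm_sub_le (gradV d α₁ (x,v)) (gradV d α₂ (x,v))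
          exact mul_le_mul_of_nonneg_right this (norm_nonneg _)
        calc ENNReal.ofReal ‖α₂ (x,v)‖ *
              ENNReal.ofReal ‖(gradV d α₁ (x,v) - gradV d α₂ (x,v)) e‖
            ≤ ENNReal.ofReal ‖α₂ (x,v)‖ *
              (ENNReal.ofReal ((‖gradV d α₁ (x,v)‖ + ‖gradV d α₂ (x,v)‖) * ‖e‖)) := by
              exact mul_le_mul' le_rfl (ENNReal.ofReal_le_ofReal hb)
          _ = ENNReal.ofReal ‖e‖ * (ENNReal.ofReal ‖α₂ (x,v)‖ *
              (ENNReal.ofReal ‖gradV d α₁ (x,v)‖ + ENNReal.ofReal ‖gradV d α₂ (x,v)‖)) := by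
              rw [ENNReal.ofReal_mul (by positivity), ENNReal.ofReal_add (norm_nonneg _)
                (norm_nonneg _)]
              ring
          _ ≤ ENNReal.ofReal ‖e‖ * B v := by
              exact mul_le_mul' le_rfl (le_B1 v ((le_add_self).trans le_self_add) le_rfl)
    have I9 : Integrable (fun v => (fderiv ℝ (fun w : E d => (starRingEnd ℂ) (α₂ (x,w))) v) e *
        (α₁ (x,v) - α₂ (x,v))) := by
      refine integrable_of_bnd (Continuous.aestronglyMeasurable ?_)
        (ENNReal.ofReal ‖e‖) ENNReal.ofReal_ne_top Bfin ?_
      · simp only [fdc]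
        exact ((continuous_const.clm_comp cG₂).clm_apply continuous_const).mul (cα₁.sub cα₂)
      · intro v
        simp only [fdc]
        rw [norm_mul, ENNReal.ofReal_mul (norm_nonneg _)]
        have hb : ‖(conjCLM.comp (gradV d α₂ (x,v))) e‖ ≤ ‖gradV d α₂ (x,v)‖ * ‖e‖ := by
          refine le_trans (ContinuousLinearMap.le_opNorm _ _) ?_
          exact mul_le_mul_of_nonneg_right (conjCLM_comp_norm _) (norm_nonneg _)
        calc ENNReal.ofReal ‖(conjCLM.comp (gradV d α₂ (x,v))) e‖ *
              ENNReal.ofReal ‖α₁ (x,v) - α₂ (x,v)‖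
            ≤ ENNReal.ofReal (‖gradV d α₂ (x,v)‖ * ‖e‖) *
              ENNReal.ofReal ‖α₁ (x,v) - α₂ (x,v)‖ :=
              mul_le_mul' (ENNReal.ofReal_le_ofReal hb) le_rfl
          _ = ENNReal.ofReal ‖e‖ * (ENNReal.ofReal ‖α₁ (x,v) - α₂ (x,v)‖ *
              ENNReal.ofReal ‖gradV d α₂ (x,v)‖) := by
              rw [ENNReal.ofReal_mul (norm_nonneg _)]
              ring
          _ ≤ ENNReal.ofReal ‖e‖ * B v :=
              mul_le_mul' le_rfl (le_B1 v le_add_self le_add_self)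
    have IBP := integral_mul_fderiv_eq_neg_fderiv_mul_of_integrable
      (f := fun v : E d => (starRingEnd ℂ) (α₂ (x,v)))
      (g := fun v : E d => α₁ (x,v) - α₂ (x,v)) (v := e) (μ := volume)
      I9 I8 I7 (fun v _ => hdc v) (fun v _ => hdβ v)
    simp only [fdβ, fdc, ContinuousLinearMap.sub_apply, ContinuousLinearMap.comp_apply] at IBP
    rw [IBP]
    congr 1
    refine integral_congr_ae (Filter.Eventually.of_forall (fun v => ?_))
    exact mul_comm _ _
  have e4 : phaseDensity d α₁ x - phaseDensity d α₂ x
      = ∫ v, ((starRingEnd ℂ) (α₁ (x,v) - α₂ (x,v)) • gradV d α₁ (x,v)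
          - (α₁ (x,v) - α₂ (x,v)) • (conjCLM.comp (gradV d α₂ (x,v)))) := by
    rw [e2, e3, ← sub_eq_add_neg]
    exact (integral_sub I3 I6).symm
  -- final norm estimate
  rw [e4, ofReal_norm]
  refine le_trans (enorm_integral_le_lintegral_enorm _) (lintegral_mono (fun v => ?_))
  rw [← ofReal_norm]
  have hre : ‖(starRingEnd ℂ) (α₁ (x,v) - α₂ (x,v)) • gradV d α₁ (x,v)
      - (α₁ (x,v) - α₂ (x,v)) • (conjCLM.comp (gradV d α₂ (x,v)))‖
      ≤ ‖α₁ (x,v) - α₂ (x,v)‖ * (‖gradV d α₁ (x,v)‖ + ‖gradV d α₂ (x,v)‖) := by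
    refine le_trans (norm_sub_le _ _) ?_
    rw [nsmulR, nsmulR, RCLike.norm_conj, mul_add]
    have := conjCLM_comp_norm (gradV d α₂ (x,v))
    gcongr
  refine le_trans (ENNReal.ofReal_le_ofReal hre) ?_
  rw [ENNReal.ofReal_mul (norm_nonneg _), ENNReal.ofReal_add (norm_nonneg _) (norm_nonneg _)]

lemma gradV_eq {d : ℕ} {α : E d × E d → ℂ} (hs : ContDiff ℝ 1 α) (z : E d × E d) :
    gradV d α z = (fderiv ℝ α z).comp (ContinuousLinearMap.inr ℝ (E d) (E d)) := by
  have h1 : HasFDerivAt (fun w : E d => α (z.1, w))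
      ((fderiv ℝ α z).comp (ContinuousLinearMap.inr ℝ (E d) (E d))) z.2 := by
    have h2 : HasFDerivAt (fun w : E d => (z.1, w))
        (ContinuousLinearMap.inr ℝ (E d) (E d)) z.2 :=
      (hasFDerivAt_const z.1 z.2).prodMk (hasFDerivAt_id z.2)
    exact ((hs.differentiable one_ne_zero z).hasFDerivAt.comp z.2 h2 : _)
  exact h1.fderiv

lemma gradV_cont {d : ℕ} {α : E d × E d → ℂ} (hs : ContDiff ℝ 1 α) :
    Continuous (gradV d α) := by
  have : Continuous (fun z => (fderiv ℝ α z).comp (ContinuousLinearMap.inr ℝ (E d) (E d))) :=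
    (hs.continuous_fderiv one_ne_zero).clm_comp continuous_const
  exact this.congr (fun z => (gradV_eq hs z).symm)

set_option maxHeartbeats 1000000 in
/-- `L¹` Lipschitz estimate for the phase density:
`‖φ₁ − φ₂‖_{L¹} ≤ (‖∇ᵥα₁‖_{A^{κ,2}} + ‖∇ᵥα₂‖_{A^{κ,2}}) ‖α₁ − α₂‖_{A^{κ,2}}`. -/
theorem statement16 (d : ℕ) (hd : 1 ≤ d) (κ : ℝ) (hκ : 2 * (d : ℝ) ≤ κ)
    (α₁ α₂ : E d × E d → ℂ) (hs₁ : ContDiff ℝ 1 α₁) (hs₂ : ContDiff ℝ 1 α₂)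
    (hf₁ : Anorm κ 2 α₁ < ⊤) (hf₂ : Anorm κ 2 α₂ < ⊤)
    (hg₁ : Anorm κ 2 (gradV d α₁) < ⊤) (hg₂ : Anorm κ 2 (gradV d α₂) < ⊤) :
    (∫⁻ x : E d, ENNReal.ofReal ‖phaseDensity d α₁ x - phaseDensity d α₂ x‖) ≤
      (Anorm κ 2 (gradV d α₁) + Anorm κ 2 (gradV d α₂)) * Anorm κ 2 (α₁ - α₂) := by
  -- basic measurable pieces
  have cα₁ : Continuous α₁ := hs₁.continuous
  have cα₂ : Continuous α₂ := hs₂.continuous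
  have cG₁ : Continuous (gradV d α₁) := gradV_cont hs₁
  have cG₂ : Continuous (gradV d α₂) := gradV_cont hs₂
  set A₁ : E d × E d → ℝ≥0∞ := fun z => ENNReal.ofReal ‖α₁ z‖ with hA₁
  set A₂ : E d × E d → ℝ≥0∞ := fun z => ENNReal.ofReal ‖α₂ z‖ with hA₂
  set Bb : E d × E d → ℝ≥0∞ := fun z => ENNReal.ofReal ‖α₁ z - α₂ z‖ with hBb
  set N₁ : E d × E d → ℝ≥0∞ := fun z => ENNReal.ofReal ‖gradV d α₁ z‖ with hN₁
  set N₂ : E d × E d → ℝ≥0∞ := fun z => ENNReal.ofReal ‖gradV d α₂ z‖ with hN₂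
  have mA₁ : Measurable A₁ := cα₁.norm.measurable.ennreal_ofReal
  have mA₂ : Measurable A₂ := cα₂.norm.measurable.ennreal_ofReal
  have mBb : Measurable Bb := (cα₁.sub cα₂).norm.measurable.ennreal_ofReal
  have mN₁ : Measurable N₁ := cG₁.norm.measurable.ennreal_ofReal
  have mN₂ : Measurable N₂ := cG₂.norm.measurable.ennreal_ofReal
  -- L² quantities
  have hconj : Real.HolderConjugate 2 2 := Real.HolderConjugate.two_two
  have CS : ∀ (u w : E d × E d → ℝ≥0∞), Measurable u → Measurable w →
      (∫⁻ z, u z * w z) ≤ (∫⁻ z, u z ^ (2:ℝ)) ^ ((1:ℝ)/2) * (∫⁻ z, w z ^ (2:ℝ)) ^ ((1:ℝ)/2) :=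
    fun u w hu hw =>
      ENNReal.lintegral_mul_le_Lp_mul_Lq volume hconj hu.aemeasurable hw.aemeasurable
  have MK : ∀ (u w : E d × E d → ℝ≥0∞), Measurable u → Measurable w →
      (∫⁻ z, (u z + w z) ^ (2:ℝ)) ^ ((1:ℝ)/2) ≤
        (∫⁻ z, u z ^ (2:ℝ)) ^ ((1:ℝ)/2) + (∫⁻ z, w z ^ (2:ℝ)) ^ ((1:ℝ)/2) :=
    fun u w hu hw =>
      ENNReal.lintegral_Lp_add_le hu.aemeasurable hw.aemeasurable one_le_two
  have JA₁ : (∫⁻ z, A₁ z ^ (2:ℝ)) ^ ((1:ℝ)/2) ≤ Anorm κ 2 α₁ := l2_le_Anorm κ α₁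
  have JA₂ : (∫⁻ z, A₂ z ^ (2:ℝ)) ^ ((1:ℝ)/2) ≤ Anorm κ 2 α₂ := l2_le_Anorm κ α₂
  have JN₁ : (∫⁻ z, N₁ z ^ (2:ℝ)) ^ ((1:ℝ)/2) ≤ Anorm κ 2 (gradV d α₁) :=
    l2_le_Anorm κ (gradV d α₁)
  have JN₂ : (∫⁻ z, N₂ z ^ (2:ℝ)) ^ ((1:ℝ)/2) ≤ Anorm κ 2 (gradV d α₂) :=
    l2_le_Anorm κ (gradV d α₂)
  have JBb : (∫⁻ z, Bb z ^ (2:ℝ)) ^ ((1:ℝ)/2) ≤ Anorm κ 2 (α₁ - α₂) := by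
    have := l2_le_Anorm κ (α₁ - α₂)
    simpa only [Pi.sub_apply] using this
  have JBb_lt : (∫⁻ z, Bb z ^ (2:ℝ)) ^ ((1:ℝ)/2) < ⊤ := by
    have hpt : ∀ z, Bb z ≤ A₁ z + A₂ z := fun z => by
      rw [hA₁, hA₂, hBb, ← ENNReal.ofReal_add (norm_nonneg _) (norm_nonneg _)]
      exact ENNReal.ofReal_le_ofReal (norm_sub_le _ _)
    have h1 : (∫⁻ z, Bb z ^ (2:ℝ)) ^ ((1:ℝ)/2) ≤ (∫⁻ z, (A₁ z + A₂ z) ^ (2:ℝ)) ^ ((1:ℝ)/2) := by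
      refine ENNReal.rpow_le_rpow (lintegral_mono fun z => ?_) (by norm_num)
      exact ENNReal.rpow_le_rpow (hpt z) (by norm_num)
    refine lt_of_le_of_lt (h1.trans (MK A₁ A₂ mA₁ mA₂)) ?_
    exact ENNReal.add_lt_top.2 ⟨lt_of_le_of_lt JA₁ hf₁, lt_of_le_of_lt JA₂ hf₂⟩
  -- the dominating function for Tonelli
  set P : E d × E d → ℝ≥0∞ := fun z => ((A₁ z + A₂ z + Bb z) * (N₁ z + N₂ z)
      + A₂ z * Bb z) with hP
  have mP : Measurable P := (((mA₁.add mA₂).add mBb).mul (mN₁.add mN₂)).add (mA₂.mul mBb)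
  have Pfin : (∫⁻ z, P z) < ⊤ := by
    have h1 : (∫⁻ z, P z) = (∫⁻ z, (A₁ z + A₂ z + Bb z) * (N₁ z + N₂ z))
        + ∫⁻ z, A₂ z * Bb z := by
      rw [hP]
      exact lintegral_add_left (((mA₁.add mA₂).add mBb).mul (mN₁.add mN₂)) _
    rw [h1]
    have h2 : (∫⁻ z, (A₁ z + A₂ z + Bb z) * (N₁ z + N₂ z)) < ⊤ := by
      refine lt_of_le_of_lt (CS _ _ ((mA₁.add mA₂).add mBb) (mN₁.add mN₂)) ?_
      refine ENNReal.mul_lt_top ?_ ?_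
      · refine lt_of_le_of_lt ((MK _ _ (mA₁.add mA₂) mBb).trans
          (add_le_add_left (MK A₁ A₂ mA₁ mA₂) _)) ?_
        exact ENNReal.add_lt_top.2 ⟨ENNReal.add_lt_top.2
          ⟨lt_of_le_of_lt JA₁ hf₁, lt_of_le_of_lt JA₂ hf₂⟩, JBb_lt⟩
      · refine lt_of_le_of_lt (MK N₁ N₂ mN₁ mN₂) ?_
        exact ENNReal.add_lt_top.2 ⟨lt_of_le_of_lt JN₁ hg₁, lt_of_le_of_lt JN₂ hg₂⟩
    have h3 : (∫⁻ z, A₂ z * Bb z) < ⊤ := by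
      refine lt_of_le_of_lt (CS _ _ mA₂ mBb) ?_
      exact ENNReal.mul_lt_top (lt_of_le_of_lt JA₂ hf₂) JBb_lt
    exact ENNReal.add_lt_top.2 ⟨h2, h3⟩
  -- Tonelli: a.e. finiteness of slices
  have hslice : ∀ᵐ x : E d, (∫⁻ v, P (x, v)) < ⊤ := by
    refine ae_lt_top (Measurable.lintegral_prod_right' (f := fun z : E d × E d => P z) mP) ?_
    have : (∫⁻ x, ∫⁻ v, P (x, v)) = ∫⁻ z, P z := by
      rw [MeasureTheory.Measure.volume_eq_prod]
      exact (MeasureTheory.lintegral_prod P mP.aemeasurable).symm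
    rw [this]
    exact Pfin.ne
  -- main pointwise bound
  have main : (∫⁻ x : E d, ENNReal.ofReal ‖phaseDensity d α₁ x - phaseDensity d α₂ x‖)
      ≤ ∫⁻ x, ∫⁻ v, Bb (x,v) * (N₁ (x,v) + N₂ (x,v)) := by
    refine lintegral_mono_ae ?_
    filter_upwards [hslice] with x hx
    exact corex hs₁ hs₂ x hx
  refine le_trans main ?_
  have step2 : (∫⁻ x : E d, ∫⁻ v, Bb (x,v) * (N₁ (x,v) + N₂ (x,v)))
      = ∫⁻ z, Bb z * (N₁ z + N₂ z) := by
    rw [MeasureTheory.Measure.volume_eq_prod]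
    exact (MeasureTheory.lintegral_prod _ (mBb.mul (mN₁.add mN₂)).aemeasurable).symm
  rw [step2]
  refine le_trans (CS _ _ mBb (mN₁.add mN₂)) ?_
  rw [mul_comm]
  refine mul_le_mul' ?_ JBb
  exact le_trans (MK N₁ N₂ mN₁ mN₂) (add_le_add JN₁ JN₂)
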